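/- Deciding whether a node W is a b-possible descendant of a node set X in a maximal PDAG G can be reduced to reachability along unshielded definite-status b-possibly causal paths: W ∈ b-PossDe(X,G) if and only if W ∈ X or there is an unshielded path ⟨X = V_0, …, V_k = W⟩ from some X ∈ X to W in G such that no edge V_i ← V_{i+1} (0 ≤ i < k) is in G. -/

import Mathlib

/-- A partially directed graph with at most one edge between any two nodes
and no directed cycles (a PDAG). -/
structure PDAG (V : Type) where
  dir : V → V → Prop
  undir : V → V → Prop
  undir_symm : ∀ {x y}, undir x y → undir y x
  undir_irrefl : ∀ x, ¬ undir x x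
  dir_not_undir : ∀ x y, dir x y → ¬ undir x y
  acyclic : ∀ x, ¬ Relation.TransGen dir x x

namespace PDAG

variable {V : Type}

/-- There is an undirected edge between `x` and `y`. -/
def undirE (G : PDAG V) (x y : V) : Prop := G.undir x y ∨ G.undir y x

/-- `x` and `y` are adjacent. -/
def adj (G : PDAG V) (x y : V) : Prop := G.dir x y ∨ G.dir y x ∨ G.undirE x y

/-- The list of consecutive pairs of a list. -/
def consPairs (p : List V) : List (V × V) := p.zip p.tail

/-- The list of consecutive triples of a list. -/
def triples : List V → List (V × V × V)
  | a :: b :: c :: rest => (a, b, c) :: triples (b :: c :: rest)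
  | _ => []

/-- `p` is a path in `G`: at least two distinct nodes, pairwise successive adjacency. -/
def IsPath (G : PDAG V) (p : List V) : Prop :=
  2 ≤ p.length ∧ p.Nodup ∧ ∀ e ∈ consPairs p, G.adj e.1 e.2

/-- `p` is a path in `G` from `x` to `y`. -/
def PathFromTo (G : PDAG V) (p : List V) (x y : V) : Prop :=
  G.IsPath p ∧ p.head? = some x ∧ p.getLast? = some y

/-- `p` is a causal (fully directed) path in `G`. -/
def IsCausal (G : PDAG V) (p : List V) : Prop :=
  2 ≤ p.length ∧ p.Nodup ∧ ∀ e ∈ consPairs p, G.dir e.1 e.2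

/-- `p` is a non-causal path: it contains at least one edge directed backwards. -/
def NonCausal (G : PDAG V) (p : List V) : Prop :=
  G.IsPath p ∧ ∃ e ∈ consPairs p, G.dir e.2 e.1

/-- `p` is b-possibly causal in `G`: there is no edge `V_i ← V_j` for `i < j`. -/
def BPossCausal (G : PDAG V) (p : List V) : Prop :=
  G.IsPath p ∧ ∀ i j : Fin p.length, (i : ℕ) < (j : ℕ) → ¬ G.dir (p.get j) (p.get i)

/-- `p` is b-non-causal in `G`: some edge `V_i ← V_j` with `i < j` exists in `G`. -/
def BNonCausal (G : PDAG V) (p : List V) : Prop :=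
  G.IsPath p ∧ ∃ i j : Fin p.length, (i : ℕ) < (j : ℕ) ∧ G.dir (p.get j) (p.get i)

/-- A path with no edge on it pointing backwards (possibly causal in the local sense). -/
def LocalPossCausal (G : PDAG V) (p : List V) : Prop :=
  G.IsPath p ∧ ∀ e ∈ consPairs p, ¬ G.dir e.2 e.1

/-- `p` is unshielded: the outer nodes of every consecutive triple are non-adjacent. -/
def Unshielded (G : PDAG V) (p : List V) : Prop :=
  ∀ t ∈ triples p, ¬ G.adj t.1 t.2.2

/-- The middle node of a triple is a collider. -/
def ColliderAt (G : PDAG V) (t : V × V × V) : Prop :=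
  G.dir t.1 t.2.1 ∧ G.dir t.2.2 t.2.1

/-- The middle node of a triple is a definite non-collider. -/
def DefNonColliderAt (G : PDAG V) (t : V × V × V) : Prop :=
  G.dir t.2.1 t.1 ∨ G.dir t.2.1 t.2.2 ∨
    (G.undirE t.1 t.2.1 ∧ G.undirE t.2.1 t.2.2 ∧ ¬ G.adj t.1 t.2.2)

/-- `p` is a definite status path. -/
def DefiniteStatus (G : PDAG V) (p : List V) : Prop :=
  ∀ t ∈ triples p, G.ColliderAt t ∨ G.DefNonColliderAt t

/-- `y` is a descendant of `x` in `G` (via directed paths; every node descends from itself). -/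
def Desc (G : PDAG V) (x y : V) : Prop := x = y ∨ Relation.TransGen G.dir x y

/-- `p` is d-connecting given `Z`: every collider on `p` has a descendant in `Z`,
and every (definite) non-collider on `p` is not in `Z`. -/
def DConn (G : PDAG V) (p : List V) (Z : Set V) : Prop :=
  ∀ t ∈ triples p,
    (G.ColliderAt t → ∃ z ∈ Z, G.Desc t.2.1 z) ∧ (¬ G.ColliderAt t → t.2.1 ∉ Z)

/-- `Z` blocks the path `p`. -/
def Blocked (G : PDAG V) (p : List V) (Z : Set V) : Prop := ¬ G.DConn p Z

/-- `G` is closed under Meek's orientation rules R1–R4 (a maximal PDAG). -/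
def ClosedMeek (G : PDAG V) : Prop :=
  (∀ a b c, G.dir a b → G.undirE b c → ¬ G.adj a c → G.dir b c) ∧
  (∀ a b c, G.dir a b → G.dir b c → G.undirE a c → G.dir a c) ∧
  (∀ a b c d, G.undirE a b → G.undirE a c → G.undirE a d →
     G.dir c b → G.dir d b → ¬ G.adj c d → G.dir a b) ∧
  (∀ a b c d, G.undirE a b → G.undirE a c → G.undirE a d →
     G.dir d c → G.dir b d → ¬ G.adj b c → G.dir a c)

/-- `G` is a DAG: it has no undirected edges. -/
def IsDAG (G : PDAG V) : Prop := ∀ x y, ¬ G.undir x y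

/-- `G` and `H` have the same unshielded colliders. -/
def SameUC (G H : PDAG V) : Prop :=
  ∀ a b c, (G.dir a b ∧ G.dir c b ∧ ¬ G.adj a c) ↔ (H.dir a b ∧ H.dir c b ∧ ¬ H.adj a c)

/-- `H` is represented by `G`: same adjacencies, same unshielded colliders,
and every directed edge of `G` is in `H`. -/
def RepresentedBy (H G : PDAG V) : Prop :=
  (∀ x y, H.adj x y ↔ G.adj x y) ∧ SameUC H G ∧ ∀ x y, G.dir x y → H.dir x y

/-- `p` is a proper path from (a member of) `X` to (a member of) `Y`:
only its first node lies in `X`. -/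
def ProperPathFromTo (G : PDAG V) (X Y : Set V) (p : List V) : Prop :=
  G.IsPath p ∧ (∃ x ∈ X, p.head? = some x) ∧ (∃ y ∈ Y, p.getLast? = some y) ∧
    ∀ v ∈ p.tail, v ∉ X

/-- `w'` is a b-possible descendant of the node `w`. -/
def BPossDescNode (G : PDAG V) (w w' : V) : Prop :=
  w' = w ∨ ∃ p, G.BPossCausal p ∧ p.head? = some w ∧ p.getLast? = some w'

/-- The b-possible descendants of the node set `X` in `G`. -/
def BPossDe (G : PDAG V) (X : Set V) : Set V :=
  {w | w ∈ X ∨ ∃ x ∈ X, ∃ p, G.BPossCausal p ∧ p.head? = some x ∧ p.getLast? = some w}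

/-- The b-possible ancestors of the node set `X` in `G`. -/
def BPossAn (G : PDAG V) (X : Set V) : Set V :=
  {w | w ∈ X ∨ ∃ x ∈ X, ∃ p, G.BPossCausal p ∧ p.head? = some w ∧ p.getLast? = some x}

/-- The b-forbidden set relative to `(X, Y)` in `G`. -/
def BForb (G : PDAG V) (X Y : Set V) : Set V :=
  {w' | ∃ w p, w ∉ X ∧ G.ProperPathFromTo X Y p ∧ G.BPossCausal p ∧ w ∈ p ∧
    G.BPossDescNode w w'}

/-- `G` is b-amenable relative to `(X, Y)`: every proper b-possibly causal path
from `X` to `Y` starts with a directed edge out of `X`. -/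
def BAmenable (G : PDAG V) (X Y : Set V) : Prop :=
  ∀ p, G.ProperPathFromTo X Y p → G.BPossCausal p →
    ∀ a b, p.head? = some a → p.tail.head? = some b → G.dir a b

/-- The b-blocking condition: `Z` blocks every proper b-non-causal definite status
path from `X` to `Y` in `G`. -/
def BBlocking (G : PDAG V) (X Y Z : Set V) : Prop :=
  ∀ p, G.ProperPathFromTo X Y p → G.BNonCausal p → G.DefiniteStatus p → G.Blocked p Z

/-- The b-adjustment criterion for `Z` relative to `(X, Y)` in `G`. -/
def BAdjCrit (G : PDAG V) (X Y Z : Set V) : Prop :=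
  G.BAmenable X Y ∧ Z ∩ G.BForb X Y = ∅ ∧ G.BBlocking X Y Z

/-- In a DAG: `Z` blocks every proper non-causal path from `X` to `Y`. -/
def DagBlocking (D : PDAG V) (X Y Z : Set V) : Prop :=
  ∀ p, D.ProperPathFromTo X Y p → D.NonCausal p → D.Blocked p Z

/-- The canonical adjustment set `b-Adjust(X, Y, G)`. -/
def BAdjust (G : PDAG V) (X Y : Set V) : Set V :=
  G.BPossAn (X ∪ Y) \ (X ∪ Y ∪ G.BForb X Y)

/-- `C` is a CPDAG: a maximal PDAG representing a Markov equivalence class of DAGs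
in which every undirected edge is realized in both orientations by represented DAGs. -/
def IsCPDAG (C : PDAG V) : Prop :=
  C.ClosedMeek ∧ (∃ D : PDAG V, D.IsDAG ∧ RepresentedBy D C) ∧
  ∀ x y, C.undirE x y →
    (∃ D : PDAG V, D.IsDAG ∧ RepresentedBy D C ∧ D.dir x y) ∧
    (∃ D : PDAG V, D.IsDAG ∧ RepresentedBy D C ∧ D.dir y x)

end PDAG

namespace PDAG

variable {V : Type} {G : PDAG V}

lemma undirE_symm' {x y : V} (h : G.undirE x y) : G.undirE y x := h.symm

lemma dir_not_undirE {x y : V} (h : G.dir x y) (h2 : G.undirE x y) : False := by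
  rcases h2 with h2 | h2
  · exact G.dir_not_undir x y h h2
  · exact G.dir_not_undir x y h (G.undir_symm h2)

lemma dir_irrefl {x : V} (h : G.dir x x) : False :=
  G.acyclic x (Relation.TransGen.single h)

lemma not_adj_self (x : V) : ¬ G.adj x x := by
  rintro (h | h | h | h)
  · exact dir_irrefl h
  · exact dir_irrefl h
  · exact G.undir_irrefl x h
  · exact G.undir_irrefl x h

/-- Degenerate R3: no triangle `c → b`, `a — c`, `a — b`. -/
lemma triK (hG : G.ClosedMeek) {a b c : V} (h1 : G.dir c b) (h2 : G.undirE a c)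
    (h3 : G.undirE a b) : False :=
  dir_not_undirE (hG.2.2.1 a b c c h3 h2 h2 h1 h1 (not_adj_self c)) h3

/-- Directedness propagates across undirected edges. -/
lemma dir_undirE_trans (hG : G.ClosedMeek) {a b c : V} (h1 : G.dir a b)
    (h2 : G.undirE b c) : G.dir a c := by
  by_cases hadj : G.adj a c
  · rcases hadj with h | h | h
    · exact h
    · exact absurd (hG.2.1 c a b h h1 (undirE_symm' h2)) (fun hd => dir_not_undirE hd (undirE_symm' h2))
    · exact absurd (triK hG h1 (undirE_symm' h) (undirE_symm' h2)) (fun x => x)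
  · exact absurd (hG.1 a b c h1 h2 hadj) (fun hd => dir_not_undirE hd h2)

lemma consPairs_nil : consPairs ([] : List V) = [] := rfl
lemma consPairs_single (a : V) : consPairs [a] = [] := rfl
lemma consPairs_cons_cons (a b : V) (t : List V) :
    consPairs (a :: b :: t) = (a, b) :: consPairs (b :: t) := rfl

lemma forall_consPairs_iff_chain' {R : V → V → Prop} :
    ∀ {p : List V}, (∀ e ∈ consPairs p, R e.1 e.2) ↔ p.Chain' R
  | [] => by simp [consPairs_nil]; exact List.isChain_nil
  | [a] => by simp [consPairs_single]; exact List.isChain_singleton a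
  | a :: b :: t => by
      rw [consPairs_cons_cons, show List.Chain' R (a :: b :: t) ↔ R a b ∧ List.Chain' R (b :: t) from List.isChain_cons_cons, ← forall_consPairs_iff_chain' (p := b :: t)]
      constructor
      · intro h
        exact ⟨h (a, b) List.mem_cons_self, fun e he => h e (List.mem_cons_of_mem _ he)⟩
      · rintro ⟨h1, h2⟩ e he
        rcases List.mem_cons.1 he with rfl | he
        · exact h1
        · exact h2 e he

lemma triples_cons_cons_cons (a b c : V) (t : List V) :
    triples (a :: b :: c :: t) = (a, b, c) :: triples (b :: c :: t) := rfl

lemma triples_subset_cons {tr : V × V × V} {p : List V} (x : V)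
    (h : tr ∈ triples p) : tr ∈ triples (x :: p) := by
  match p with
  | [] => exact absurd h (by simp [triples])
  | [a] => exact absurd h (by simp [triples])
  | a :: b :: t => rw [triples_cons_cons_cons]; exact List.mem_cons_of_mem _ h

lemma unshielded_tail {p : List V} (h : G.Unshielded p) : G.Unshielded p.tail := by
  intro tr htr
  cases p with
  | nil => exact absurd htr (by simp [triples])
  | cons x t => exact h tr (triples_subset_cons x htr)

lemma unshielded_drop {p : List V} (h : G.Unshielded p) (i : ℕ) :
    G.Unshielded (p.drop i) := by
  induction i with
  | zero => simpa using h
  | succ n ih => rw [← List.tail_drop]; exact unshielded_tail ih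

lemma chain'_drop {R : V → V → Prop} {p : List V} (h : p.Chain' R) (i : ℕ) :
    (p.drop i).Chain' R := by
  induction i with
  | zero => simpa using h
  | succ n ih => rw [← List.tail_drop]; exact ih.tail

lemma chain'_dir_transGen : ∀ (t : List V) (u : V), List.Chain' G.dir (u :: t) →
    ∀ b ∈ t, Relation.TransGen G.dir u b := by
  intro t
  induction t with
  | nil => intro u _ b hb; exact absurd hb (by simp)
  | cons v t' ih =>
    intro u hch b hb
    rw [show List.Chain' G.dir (u :: v :: t') ↔ _ from List.isChain_cons_cons] at hch
    rcases List.mem_cons.1 hb with rfl | hb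
    · exact Relation.TransGen.single hch.1
    · exact (ih v hch.2 b hb).head hch.1

/-- If the first edge of an unshielded, locally forward path is directed,
all edges are directed. -/
lemma all_dir (hG : G.ClosedMeek) : ∀ (t : List V) (u v : V),
    G.Unshielded (u :: v :: t) → List.Chain' G.adj (u :: v :: t) →
    List.Chain' (fun x y => ¬ G.dir y x) (u :: v :: t) → G.dir u v →
    List.Chain' G.dir (u :: v :: t) := by
  intro t
  induction t with
  | nil => intro u v _ _ _ huv; exact List.isChain_pair.2 huv
  | cons w t' ih =>
    intro u v hunsh hadj hfwd huv
    have hvw : G.dir v w := by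
      have hadj' : G.adj v w := (List.isChain_cons_cons.1 (List.isChain_cons_cons.1 hadj).2).1
      have hfwd' : ¬ G.dir w v := (List.isChain_cons_cons.1 (List.isChain_cons_cons.1 hfwd).2).1
      rcases hadj' with h | h | h
      · exact h
      · exact absurd h hfwd'
      · exfalso
        have hd : G.dir u w := dir_undirE_trans hG huv h
        exact hunsh (u, v, w) (by rw [triples_cons_cons_cons]; exact List.mem_cons_self)
          (Or.inl hd)
    exact List.isChain_cons_cons.2 ⟨huv, ih v w (unshielded_tail hunsh)
      (List.isChain_cons_cons.1 hadj).2 (List.isChain_cons_cons.1 hfwd).2 hvw⟩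

/-- Core lemma: on an unshielded, locally forward path, no later node has a
directed edge into the head. -/
lemma no_back_head (hG : G.ClosedMeek) : ∀ (t : List V) (u : V),
    G.Unshielded (u :: t) → List.Chain' G.adj (u :: t) →
    List.Chain' (fun x y => ¬ G.dir y x) (u :: t) →
    ∀ b ∈ t, ¬ G.dir b u := by
  intro t
  induction t with
  | nil => intro u _ _ _ b hb; exact absurd hb (by simp)
  | cons v t' ih =>
    intro u hunsh hadj hfwd b hb hdir
    have hadjuv : G.adj u v := (List.isChain_cons_cons.1 hadj).1
    have hfwduv : ¬ G.dir v u := (List.isChain_cons_cons.1 hfwd).1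
    rcases List.mem_cons.1 hb with rfl | hb
    · exact hfwduv hdir
    · rcases hadjuv with h | h | h
      · -- first edge directed: whole path directed, cycle
        have hall := all_dir hG t' u v hunsh hadj hfwd h
        have := chain'_dir_transGen (v :: t') u hall b (List.mem_cons_of_mem _ hb)
        exact G.acyclic u (this.tail hdir)
      · exact hfwduv h
      · -- first edge undirected: push the back-edge one step
        have hbv : G.dir b v := dir_undirE_trans hG hdir h
        exact ih v (unshielded_tail hunsh) (List.isChain_cons_cons.1 hadj).2
          (List.isChain_cons_cons.1 hfwd).2 b hb hbv

lemma noback_of_unshielded (hG : G.ClosedMeek) {p : List V} (hunsh : G.Unshielded p)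
    (hadj : List.Chain' G.adj p) (hfwd : List.Chain' (fun x y => ¬ G.dir y x) p) :
    ∀ (i j : ℕ) (hi : i < p.length) (hj : j < p.length), i < j →
      ¬ G.dir (p[j]'hj) (p[i]'hi) := by
  intro i j hi hj hij
  have hdropi : p.drop i = p[i] :: p.drop (i + 1) := List.drop_eq_getElem_cons hi
  have hmem : p[j]'hj ∈ p.drop (i + 1) := by
    have hlen : j - (i + 1) < (p.drop (i + 1)).length := by
      rw [List.length_drop]; omega
    have : (p.drop (i + 1))[j - (i + 1)]'hlen = p[j]'hj := by
      rw [List.getElem_drop]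
      congr 1
      omega
    rw [← this]
    exact List.getElem_mem _
  have h1 : G.Unshielded (p.drop i) := unshielded_drop hunsh i
  have h2 := chain'_drop hadj i
  have h3 := chain'_drop hfwd i
  rw [hdropi] at h1 h2 h3
  exact no_back_head hG (p.drop (i + 1)) (p[i]'hi) h1 h2 h3 _ hmem

lemma consPairs_mem_getElem : ∀ {p : List V} {e : V × V}, e ∈ consPairs p →
    ∃ (i : ℕ) (h : i + 1 < p.length), p[i] = e.1 ∧ p[i + 1] = e.2 := by
  intro p
  match p with
  | [] => intro e he; exact absurd he (by simp [consPairs_nil])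
  | [a] => intro e he; exact absurd he (by simp [consPairs_single])
  | a :: b :: t =>
    intro e he
    rw [consPairs_cons_cons] at he
    rcases List.mem_cons.1 he with rfl | he
    · exact ⟨0, by simp, rfl, rfl⟩
    · obtain ⟨i, h, h1, h2⟩ := consPairs_mem_getElem (p := b :: t) he
      exact ⟨i + 1, by simpa using Nat.succ_lt_succ h, h1, h2⟩

lemma bposs_forward {p : List V} (hp : G.BPossCausal p) :
    ∀ e ∈ consPairs p, ¬ G.dir e.2 e.1 := by
  intro e he
  obtain ⟨i, h, h1, h2⟩ := consPairs_mem_getElem he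
  have := hp.2 ⟨i, by omega⟩ ⟨i + 1, h⟩ (by simp)
  simpa [List.get_eq_getElem, h1, h2] using this

lemma noback_sublist {p q : List V} (hsub : List.Sublist q p)
    (hp : ∀ i j : Fin p.length, (i : ℕ) < (j : ℕ) → ¬ G.dir (p.get j) (p.get i)) :
    ∀ i j : Fin q.length, (i : ℕ) < (j : ℕ) → ¬ G.dir (q.get j) (q.get i) := by
  rw [List.sublist_iff_exists_fin_orderEmbedding_get_eq] at hsub
  obtain ⟨f, hf⟩ := hsub
  intro i j hij
  rw [hf i, hf j]
  exact hp (f i) (f j) (f.strictMono (by exact hij))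

lemma triples_decomp : ∀ {p : List V} {a b c : V}, (a, b, c) ∈ triples p →
    ∃ l r, p = l ++ a :: b :: c :: r := by
  intro p
  match p with
  | [] => intro a b c h; exact absurd h (by simp [triples])
  | [x] => intro a b c h; exact absurd h (by simp [triples])
  | x :: y :: t =>
    intro a b c h
    match t with
    | [] => exact absurd h (by simp [triples])
    | z :: t' =>
      rw [triples_cons_cons_cons] at h
      rcases List.mem_cons.1 h with h | h
      · simp only [Prod.mk.injEq] at h
        obtain ⟨rfl, rfl, rfl⟩ := h
        exact ⟨[], t', rfl⟩
      · obtain ⟨l, r, hlr⟩ := triples_decomp (p := y :: z :: t') h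
        exact ⟨x :: l, r, by rw [List.cons_append, hlr]⟩

/-- Shortening step: any `BPossCausal` path can be replaced by an unshielded one
with the same endpoints. -/
lemma descent (hG : G.ClosedMeek) : ∀ (n : ℕ) (p : List V), p.length ≤ n →
    G.BPossCausal p →
    ∃ q, q.head? = p.head? ∧ q.getLast? = p.getLast? ∧ G.BPossCausal q ∧
      G.Unshielded q ∧ ∀ e ∈ consPairs q, ¬ G.dir e.2 e.1 := by
  intro n
  induction n with
  | zero => intro p hlen hp; exact absurd hp.1.1 (by omega)
  | succ n ih =>
    intro p hlen hp
    by_cases hunsh : G.Unshielded p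
    · exact ⟨p, rfl, rfl, hp, hunsh, bposs_forward hp⟩
    · simp only [Unshielded, not_forall] at hunsh
      obtain ⟨⟨a, b, c⟩, ht, hadj⟩ := hunsh
      rw [not_not] at hadj
      replace hadj : G.adj a c := hadj
      obtain ⟨l, r, rfl⟩ := triples_decomp ht
      have hsub : List.Sublist (l ++ a :: c :: r) (l ++ a :: b :: c :: r) :=
        (List.Sublist.cons₂ a (List.Sublist.cons b (List.Sublist.refl (c :: r)))).append_left l
      have hlen' : (l ++ a :: c :: r).length + 1 = (l ++ a :: b :: c :: r).length := by
        simp; omega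
      have hadjchain : List.Chain' G.adj (l ++ a :: b :: c :: r) :=
        forall_consPairs_iff_chain'.1 hp.1.2.2
      have hadjchain' : List.Chain' G.adj (l ++ a :: c :: r) := by
        rw [show List.Chain' G.adj (l ++ a :: b :: c :: r) ↔ _ from List.isChain_append] at hadjchain
        rw [show List.Chain' G.adj (l ++ a :: c :: r) ↔ _ from List.isChain_append]
        obtain ⟨h1, h2, h3⟩ := hadjchain
        refine ⟨h1, ?_, by simpa using h3⟩
        rw [List.isChain_cons_cons] at h2 ⊢
        exact ⟨hadj, (List.isChain_cons_cons.1 h2.2).2⟩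
      have hp' : G.BPossCausal (l ++ a :: c :: r) := by
        refine ⟨⟨by simp; omega, hsub.nodup hp.1.2.1,
          forall_consPairs_iff_chain'.2 hadjchain'⟩, noback_sublist hsub hp.2⟩
      obtain ⟨q, hq1, hq2, hq3, hq4, hq5⟩ := ih (l ++ a :: c :: r) (by omega) hp'
      refine ⟨q, ?_, ?_, hq3, hq4, hq5⟩
      · rw [hq1]
        cases l with
        | nil => rfl
        | cons x xs => simp
      · have e1 : (l ++ a :: c :: r).getLast? = (c :: r).getLast? := by
          rw [List.getLast?_append_cons, List.getLast?_cons_cons]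
        have e2 : (l ++ a :: b :: c :: r).getLast? = (c :: r).getLast? := by
          rw [List.getLast?_append_cons, List.getLast?_cons_cons, List.getLast?_cons_cons]
        rw [hq2, e1, e2]

end PDAG

/-- membership in the b-possible descendants of `X` is equivalent to
reachability along an unshielded path with no edge on it oriented backwards. -/
theorem stmt16 {V : Type} (G : PDAG V) (hG : G.ClosedMeek) (X : Set V) (W : V) :
    W ∈ G.BPossDe X ↔
      W ∈ X ∨ ∃ x ∈ X, ∃ p : List V, G.PathFromTo p x W ∧ G.Unshielded p ∧
        ∀ e ∈ PDAG.consPairs p, ¬ G.dir e.2 e.1 := by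
  constructor
  · rintro (h | ⟨x, hx, p, hp, hh, hl⟩)
    · exact Or.inl h
    · obtain ⟨q, hq1, hq2, hq3, hq4, hq5⟩ := PDAG.descent hG p.length p le_rfl hp
      exact Or.inr ⟨x, hx, q, ⟨hq3.1, by rw [hq1, hh], by rw [hq2, hl]⟩, hq4, hq5⟩
  · rintro (h | ⟨x, hx, p, ⟨hpath, hh, hl⟩, hunsh, hfwd⟩)
    · exact Or.inl h
    · refine Or.inr ⟨x, hx, p, ⟨hpath, ?_⟩, hh, hl⟩
      intro i j hij
      exact PDAG.noback_of_unshielded hG hunsh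
        (PDAG.forall_consPairs_iff_chain'.1 hpath.2.2)
        (PDAG.forall_consPairs_iff_chain'.1 hfwd) i j i.2 j.2 hij
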